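/- Let G' be a vertex-disjoint union of complete graphs K_{p₁}, ..., K_{p_m} on [p−1] and let G be G' together with a new vertex p adjacent to all of [p−1]. Then CIM_G is a simplex of dimension 2^{p−1} − 1 − Σ_{s=1}^{m} (2^{p_s} − 1); that is, the characteristic imsets of DAGs with skeleton G form an affinely independent set of cardinality 2^{p−1} − Σ_s (2^{p_s} − 1). -/

import Mathlib

open scoped Classical

/-- A directed acyclic graph on vertex set `Fin p`. -/
structure DAGraph (p : ℕ) where
  E : Fin p → Fin p → Prop
  acyclic : ∀ i, ¬ Relation.TransGen E i i

/-- The characteristic imset of a directed graph given by the relation `E`. -/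
noncomputable def imsetRel {p : ℕ} (E : Fin p → Fin p → Prop) (S : Finset (Fin p)) : ℝ :=
  if ∃ i ∈ S, ∀ j ∈ S, j ≠ i → E j i then 1 else 0

/-- The skeleton (underlying undirected graph) of a DAG. -/
def DAGraph.skeleton {p : ℕ} (G : DAGraph p) : SimpleGraph (Fin p) where
  Adj a b := G.E a b ∨ G.E b a
  symm := ⟨fun a b h => Or.symm h⟩
  loopless := ⟨fun a h =>
    h.elim (fun h' => G.acyclic a (Relation.TransGen.single h'))
      (fun h' => G.acyclic a (Relation.TransGen.single h'))⟩

/-- The characteristic imset of a DAG. -/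
noncomputable def DAGraph.cim {p : ℕ} (G : DAGraph p) : Finset (Fin p) → ℝ := imsetRel G.E

/-- `G.vStruct a b c` : `a → b ← c` is a v-structure (with `a`, `c` non-adjacent). -/
def DAGraph.vStruct {p : ℕ} (G : DAGraph p) (a b c : Fin p) : Prop :=
  a ≠ c ∧ G.E a b ∧ G.E c b ∧ ¬ G.skeleton.Adj a c

/-- The relation obtained from `E` by reversing the single edge `i → j`. -/
def reverseRel {p : ℕ} (E : Fin p → Fin p → Prop) (i j : Fin p) : Fin p → Fin p → Prop :=
  fun a b => (E a b ∧ ¬(a = i ∧ b = j)) ∨ (a = j ∧ b = i)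

/-- The graph on `Fin (n+1)` obtained from a vertex-disjoint union of complete graphs on
`Fin n` (with components given by `comp : Fin n → Fin m`) by adding the extra vertex
`Fin.last n` adjacent to all other vertices. -/
def starJoin (n m : ℕ) (comp : Fin n → Fin m) : SimpleGraph (Fin (n + 1)) where
  Adj a b := a ≠ b ∧ (a = Fin.last n ∨ b = Fin.last n ∨
    ∃ (ha : a ≠ Fin.last n) (hb : b ≠ Fin.last n),
      comp (a.castPred ha) = comp (b.castPred hb))
  symm := by
    constructor
    rintro a b ⟨hne, h⟩
    refine ⟨hne.symm, ?_⟩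
    rcases h with h | h | ⟨ha, hb, hc⟩
    · exact Or.inr (Or.inl h)
    · exact Or.inl h
    · exact Or.inr (Or.inr ⟨hb, ha, hc.symm⟩)
  loopless := ⟨fun a h => h.1 rfl⟩

namespace Stmt14Aux


/-- Any finite nonempty set has a `TransGen`-maximal element for an acyclic relation. -/
lemma exists_sink {α : Type*} (r : α → α → Prop) (hirr : ∀ a, ¬ Relation.TransGen r a a)
    (S : Finset α) (hS : S.Nonempty) : ∃ i ∈ S, ∀ j ∈ S, ¬ Relation.TransGen r i j := by
  classical
  induction S using Finset.strongInduction with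
  | _ S ih =>
    obtain ⟨a, ha⟩ := hS
    by_cases hmax : ∀ j ∈ S, ¬ Relation.TransGen r a j
    · exact ⟨a, ha, hmax⟩
    · push_neg at hmax
      obtain ⟨b, hb, hab⟩ := hmax
      set S' := S.filter (fun j => Relation.TransGen r a j) with hS'
      have hsub : S' ⊂ S := by
        refine Finset.ssubset_iff_of_subset (Finset.filter_subset _ _) |>.mpr ?_
        exact ⟨a, ha, by simp [hS', hirr a]⟩
      have hne : S'.Nonempty := ⟨b, by simp [hS', hb, hab]⟩
      obtain ⟨i, hi, hmax'⟩ := ih S' hsub hne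
      have hai : Relation.TransGen r a i := (Finset.mem_filter.mp hi).2
      refine ⟨i, Finset.mem_filter.mp hi |>.1, fun j hj hij => ?_⟩
      exact hmax' j (Finset.mem_filter.mpr ⟨hj, hai.trans hij⟩) hij



variable {n m : ℕ}

/-- "single component": all elements of `T` lie in one block of `comp`. -/
def sc (comp : Fin n → Fin m) (T : Finset (Fin n)) : Prop :=
  ∀ v ∈ T, ∀ w ∈ T, comp v = comp w

/-- the part of `S` inside `Fin n`. -/
noncomputable def body (S : Finset (Fin (n + 1))) : Finset (Fin n) :=
  Finset.univ.filter (fun v => v.castSucc ∈ S)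

lemma mem_body {S : Finset (Fin (n + 1))} {v : Fin n} : v ∈ body S ↔ v.castSucc ∈ S := by
  simp [body]

lemma castSucc_ne_last (v : Fin n) : v.castSucc ≠ Fin.last n :=
  (Fin.castSucc_lt_last v).ne

/-- the candidate characteristic imset attached to a parent set `P` of the hub. -/
noncomputable def phi (comp : Fin n → Fin m) (P : Finset (Fin n)) :
    Finset (Fin (n + 1)) → ℝ := fun S =>
  if S.Nonempty ∧ (sc comp (body S) ∨ (Fin.last n ∈ S ∧ body S ⊆ P)) then 1 else 0

end Stmt14Aux

namespace Stmt14Aux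
variable {n m : ℕ}

lemma imset_one {D : DAGraph (n + 1)} {S : Finset (Fin (n + 1))} (hS : S.Nonempty)
    (hcl : ∀ a ∈ S, ∀ b ∈ S, a ≠ b → D.skeleton.Adj a b) :
    imsetRel D.E S = 1 := by
  obtain ⟨i, hi, hmax⟩ := exists_sink D.E D.acyclic S hS
  rw [imsetRel, if_pos]
  refine ⟨i, hi, fun j hj hji => ?_⟩
  rcases (show D.E j i ∨ D.E i j from hcl j hj i hi hji) with h | h
  · exact h
  · exact absurd (Relation.TransGen.single h) (hmax j hj)

lemma cim_eq (comp : Fin n → Fin m) (D : DAGraph (n + 1))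
    (hsk : D.skeleton = starJoin n m comp) :
    D.cim = phi comp (Finset.univ.filter fun v => D.E v.castSucc (Fin.last n)) := by
  funext S
  set P := Finset.univ.filter fun (v : Fin n) => D.E v.castSucc (Fin.last n) with hP
  have hmemP : ∀ v : Fin n, v ∈ P ↔ D.E v.castSucc (Fin.last n) := by
    intro v; simp [hP]
  show imsetRel D.E S = phi comp P S
  rcases S.eq_empty_or_nonempty with rfl | hne
  · simp [imsetRel, phi]
  by_cases hsc : sc comp (body S)
  · rw [phi, if_pos ⟨hne, Or.inl hsc⟩]
    apply imset_one hne
    intro a ha b hb hab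
    rw [hsk]
    show a ≠ b ∧ _
    refine ⟨hab, ?_⟩
    by_cases haL : a = Fin.last n
    · exact Or.inl haL
    by_cases hbL : b = Fin.last n
    · exact Or.inr (Or.inl hbL)
    refine Or.inr (Or.inr ⟨haL, hbL, ?_⟩)
    have ha' : a.castPred haL ∈ body S := mem_body.mpr (by rwa [Fin.castSucc_castPred])
    have hb' : b.castPred hbL ∈ body S := mem_body.mpr (by rwa [Fin.castSucc_castPred])
    exact hsc _ ha' _ hb'
  · have hvw : ∃ v ∈ body S, ∃ w ∈ body S, comp v ≠ comp w := by
      by_contra h; push_neg at h; exact hsc fun v hv w hw => h v hv w hw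
    obtain ⟨v, hv, w, hw, hvwne⟩ := hvw
    have hwit : ∀ i ∈ S, (∀ j ∈ S, j ≠ i → D.E j i) → i = Fin.last n := by
      intro i hi hpar
      by_contra hiL
      obtain ⟨z, hz, hzu⟩ : ∃ z ∈ body S, comp z ≠ comp (i.castPred hiL) := by
        by_cases h : comp v = comp (i.castPred hiL)
        · exact ⟨w, hw, fun hc => hvwne (h.trans hc.symm)⟩
        · exact ⟨v, hv, h⟩
      have hzS : z.castSucc ∈ S := mem_body.mp hz
      have hzi : z.castSucc ≠ i := by
        intro hzi
        subst hzi
        rw [Fin.castPred_castSucc] at hzu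
        exact hzu rfl
      have hE : D.E z.castSucc i := hpar _ hzS hzi
      have hadj : D.skeleton.Adj z.castSucc i := show D.E z.castSucc i ∨ D.E i z.castSucc from Or.inl hE
      rw [hsk] at hadj
      rcases (show _ ∧ _ from hadj).2 with h | h | ⟨ha, hb, hc⟩
      · exact castSucc_ne_last z h
      · exact hiL h
      · rw [Fin.castPred_castSucc] at hc
        exact hzu hc
    by_cases h1 : Fin.last n ∈ S ∧ body S ⊆ P
    · rw [phi, if_pos ⟨hne, Or.inr h1⟩, imsetRel, if_pos]
      refine ⟨Fin.last n, h1.1, fun j hj hjL => ?_⟩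
      have hj' : j.castPred hjL ∈ body S := mem_body.mpr (by rwa [Fin.castSucc_castPred])
      have := (hmemP _).mp (h1.2 hj')
      rwa [Fin.castSucc_castPred] at this
    · rw [phi, if_neg, imsetRel, if_neg]
      · rintro ⟨i, hi, hpar⟩
        have hiL := hwit i hi hpar
        subst hiL
        refine h1 ⟨hi, fun z hz => ?_⟩
        rw [hmemP]
        exact hpar _ (mem_body.mp hz) (castSucc_ne_last z)
      · rintro ⟨-, h | h⟩
        · exact hsc h
        · exact h1 h
end Stmt14Aux

namespace Stmt14Aux
variable {n m : ℕ}

/-- rank function giving a topological order. -/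
noncomputable def rank (P : Finset (Fin n)) (a : Fin (n + 1)) : ℕ :=
  if h : a = Fin.last n then n + 1
  else if a.castPred h ∈ P then (a : ℕ) else n + 2 + a

lemma val_lt_of_ne_last {a : Fin (n + 1)} (h : a ≠ Fin.last n) : (a : ℕ) < n := by
  have := a.isLt
  have : (a : ℕ) ≠ n := fun hc => h (Fin.ext hc)
  omega

lemma rank_ne (P : Finset (Fin n)) {a b : Fin (n + 1)} (hab : a ≠ b) :
    rank P a ≠ rank P b := by
  by_cases ha : a = Fin.last n <;> by_cases hb : b = Fin.last n
  · exact absurd (ha.trans hb.symm) hab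
  · rw [rank, dif_pos ha, rank, dif_neg hb]
    have := val_lt_of_ne_last hb
    split <;> omega
  · rw [rank, dif_neg ha, rank, dif_pos hb]
    have := val_lt_of_ne_last ha
    split <;> omega
  · rw [rank, dif_neg ha, rank, dif_neg hb]
    have h1 := val_lt_of_ne_last ha
    have h2 := val_lt_of_ne_last hb
    have hv : (a : ℕ) ≠ (b : ℕ) := fun hc => hab (Fin.ext hc)
    split <;> split <;> omega

def EP (comp : Fin n → Fin m) (P : Finset (Fin n)) : Fin (n + 1) → Fin (n + 1) → Prop :=
  fun a b => (starJoin n m comp).Adj a b ∧ rank P a < rank P b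

noncomputable def DP (comp : Fin n → Fin m) (P : Finset (Fin n)) : DAGraph (n + 1) where
  E := EP comp P
  acyclic := by
    intro i h
    have key : ∀ a b, Relation.TransGen (EP comp P) a b → rank P a < rank P b := by
      intro a b hab
      induction hab with
      | single h => exact h.2
      | tail _ h ih => exact ih.trans h.2
    exact lt_irrefl _ (key i i h)

lemma DP_skeleton (comp : Fin n → Fin m) (P : Finset (Fin n)) :
    (DP comp P).skeleton = starJoin n m comp := by
  ext a b
  constructor
  · rintro (⟨h, -⟩ | ⟨h, -⟩ : EP comp P a b ∨ EP comp P b a)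
    · exact h
    · exact h.symm
  · intro h
    rcases (rank_ne P h.ne).lt_or_gt with hlt | hlt
    · exact (Or.inl ⟨h, hlt⟩ : EP comp P a b ∨ EP comp P b a)
    · exact (Or.inr ⟨h.symm, hlt⟩ : EP comp P a b ∨ EP comp P b a)

lemma DP_pa (comp : Fin n → Fin m) (P : Finset (Fin n)) :
    (Finset.univ.filter fun (v : Fin n) => (DP comp P).E v.castSucc (Fin.last n)) = P := by
  ext v
  have hr : rank P v.castSucc = if v ∈ P then (v : ℕ) else n + 2 + v := by
    rw [rank, dif_neg (castSucc_ne_last v)]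
    by_cases hv : v ∈ P <;> simp [Fin.castPred_castSucc, hv]
  have hrl : rank P (Fin.last n) = n + 1 := by rw [rank, dif_pos rfl]
  simp only [Finset.mem_filter, Finset.mem_univ, true_and]
  show EP comp P v.castSucc (Fin.last n) ↔ v ∈ P
  rw [EP]
  constructor
  · rintro ⟨-, hlt⟩
    rw [hr, hrl] at hlt
    by_contra hv
    rw [if_neg hv] at hlt
    omega
  · intro hv
    refine ⟨(⟨castSucc_ne_last v, Or.inr (Or.inl rfl)⟩ : v.castSucc ≠ Fin.last n ∧ _), ?_⟩
    rw [hr, hrl, if_pos hv]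
    have := v.isLt
    omega

end Stmt14Aux

namespace Stmt14Aux
variable {n m : ℕ}

noncomputable def SP (P : Finset (Fin n)) : Finset (Fin (n + 1)) :=
  insert (Fin.last n) (P.image Fin.castSucc)

lemma body_SP (P : Finset (Fin n)) : body (SP P) = P := by
  ext v
  simp [mem_body, SP, (castSucc_ne_last v), (Fin.castSucc_injective n).eq_iff]

lemma phi_SP (comp : Fin n → Fin m) (Q P : Finset (Fin n)) :
    phi comp Q (SP P) = if sc comp P ∨ P ⊆ Q then 1 else 0 := by
  rw [phi, body_SP]
  have hmem : Fin.last n ∈ SP P := Finset.mem_insert_self _ _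
  have hne : (SP P).Nonempty := ⟨_, hmem⟩
  simp [hne, hmem]

lemma sc_subset {comp : Fin n → Fin m} {P T : Finset (Fin n)} (h : sc comp P)
    (hsub : T ⊆ P) : sc comp T := fun v hv w hw => h v (hsub hv) w (hsub hw)

lemma sc_empty (comp : Fin n → Fin m) : sc comp ∅ := fun v hv => absurd hv (by simp)

lemma phi_of_sc {comp : Fin n → Fin m} {P : Finset (Fin n)} (hP : sc comp P) :
    phi comp P = phi comp ∅ := by
  funext S
  rw [phi, phi]
  refine if_congr ?_ rfl rfl
  constructor
  · rintro ⟨h1, h2⟩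
    refine ⟨h1, Or.inl ?_⟩
    rcases h2 with h | ⟨-, h⟩
    · exact h
    · exact sc_subset hP h
  · rintro ⟨h1, h2⟩
    refine ⟨h1, ?_⟩
    rcases h2 with h | ⟨-, h⟩
    · exact Or.inl h
    · exact Or.inl (sc_subset (sc_empty comp) h)

lemma phi_inj {comp : Fin n → Fin m} {P Q : Finset (Fin n)} (hP : P = ∅ ∨ ¬ sc comp P)
    (hQ : Q = ∅ ∨ ¬ sc comp Q) (h : phi comp P = phi comp Q) : P = Q := by
  have key : ∀ P' Q' : Finset (Fin n), ¬ sc comp P' → phi comp P' = phi comp Q' →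
      P' ⊆ Q' := by
    intro P' Q' hsc hphi
    have h1 : phi comp P' (SP P') = 1 := by
      rw [phi_SP, if_pos (Or.inr Finset.Subset.rfl)]
    rw [hphi, phi_SP] at h1
    by_contra hsub
    rw [if_neg] at h1
    · exact zero_ne_one h1
    · rintro (h | h)
      · exact hsc h
      · exact hsub h
  rcases hP with rfl | hP <;> rcases hQ with rfl | hQ
  · rfl
  · exact (Finset.subset_empty.mp (key Q ∅ hQ h.symm)).symm
  · exact Finset.subset_empty.mp (key P ∅ hP h)
  · exact Finset.Subset.antisymm (key P Q hP h) (key Q P hQ h.symm)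

lemma zeta_SP {comp : Fin n → Fin m} {Q : Finset (Fin n)} (P : Finset (Fin n))
    (hP : ¬ sc comp P) :
    phi comp Q (SP P) - phi comp ∅ (SP P) = if P ⊆ Q then 1 else 0 := by
  rw [phi_SP, phi_SP]
  have h0 : ¬ (sc comp P ∨ P ⊆ (∅ : Finset (Fin n))) := by
    rintro (h | h)
    · exact hP h
    · exact hP (Finset.subset_empty.mp h ▸ sc_empty comp)
  rw [if_neg h0, sub_zero]
  refine if_congr ?_ rfl rfl
  constructor
  · rintro (h | h)
    · exact absurd h hP
    · exact h
  · exact Or.inr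

lemma linIndep (comp : Fin n → Fin m) :
    LinearIndependent ℝ (fun Q : {P : Finset (Fin n) // ¬ sc comp P} =>
      (phi comp Q.1 - phi comp ∅ : Finset (Fin (n + 1)) → ℝ)) := by
  rw [linearIndependent_iff']
  intro s g hsum
  suffices key : ∀ k : ℕ, ∀ i ∈ s, n ≤ i.1.card + k → g i = 0 by
    intro i hi
    exact key n i hi (Nat.le_add_left n _)
  intro k
  induction k using Nat.strong_induction_on with
  | _ k ih =>
    intro i hi hcard
    have happ := congrFun hsum (SP i.1)
    rw [Finset.sum_apply, Pi.zero_apply] at happ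
    have heval : ∀ j ∈ s, (g j • (phi comp j.1 - phi comp ∅ :
        Finset (Fin (n + 1)) → ℝ)) (SP i.1) = if i.1 ⊆ j.1 then g j else 0 := by
      intro j hj
      rw [Pi.smul_apply, Pi.sub_apply, zeta_SP i.1 i.2]
      rw [smul_eq_mul, mul_ite, mul_one, mul_zero]
    rw [Finset.sum_congr rfl heval, ← Finset.sum_filter] at happ
    have hfin : ∑ j ∈ s.filter (fun j => i.1 ⊆ j.1), g j = g i := by
      refine Finset.sum_eq_single i ?_ ?_
      · intro j hj hji
        rw [Finset.mem_filter] at hj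
        have hne : i.1 ≠ j.1 := fun hc => hji (Subtype.ext hc.symm)
        have hlt : i.1.card < j.1.card :=
          Finset.card_lt_card (Finset.ssubset_iff_subset_ne.mpr ⟨hj.2, hne⟩)
        have hle : j.1.card ≤ n := by
          have := Finset.card_le_card (Finset.subset_univ j.1)
          simpa using this
        rcases k with _ | k
        · omega
        · exact ih k (Nat.lt_succ_self k) j hj.1 (by omega)
      · intro hnot
        exact absurd (Finset.mem_filter.mpr ⟨hi, Finset.Subset.rfl⟩) hnot
    rw [hfin] at happ
    exact happ

end Stmt14Aux

namespace Stmt14Aux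
variable {n m : ℕ}

lemma card_R (comp : Fin n → Fin m) :
    (Finset.univ.filter fun P : Finset (Fin n) => P = ∅ ∨ ¬ sc comp P).card =
      2 ^ n - ∑ s : Fin m, (2 ^ (Finset.univ.filter fun v => comp v = s).card - 1) := by
  classical
  have htot := Finset.card_filter_add_card_filter_not
    (s := (Finset.univ : Finset (Finset (Fin n)))) (fun P => P = ∅ ∨ ¬ sc comp P)
  have huniv : (Finset.univ : Finset (Finset (Fin n))).card = 2 ^ n := by
    rw [Finset.card_univ, Fintype.card_finset, Fintype.card_fin]
  have hcompl : (Finset.univ.filter fun P : Finset (Fin n) =>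
      ¬(P = ∅ ∨ ¬ sc comp P)).card =
      ∑ s : Fin m, (2 ^ (Finset.univ.filter fun v => comp v = s).card - 1) := by
    have heq : (Finset.univ.filter fun P : Finset (Fin n) => ¬(P = ∅ ∨ ¬ sc comp P)) =
        Finset.univ.biUnion (fun s : Fin m =>
          ((Finset.univ.filter fun v => comp v = s).powerset.erase ∅)) := by
      ext P
      simp only [Finset.mem_filter, Finset.mem_univ, true_and, Finset.mem_biUnion,
        Finset.mem_erase, Finset.mem_powerset, not_or, not_not]
      constructor
      · rintro ⟨hne, hsc⟩
        obtain ⟨v, hv⟩ := Finset.nonempty_iff_ne_empty.mpr hne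
        refine ⟨comp v, hne, fun w hw => ?_⟩
        rw [Finset.mem_filter]
        exact ⟨Finset.mem_univ w, hsc w hw v hv⟩
      · rintro ⟨s, hne, hsub⟩
        refine ⟨hne, fun a ha b hb => ?_⟩
        have h1 := (Finset.mem_filter.mp (hsub ha)).2
        have h2 := (Finset.mem_filter.mp (hsub hb)).2
        rw [h1, h2]
    rw [heq, Finset.card_biUnion]
    · refine Finset.sum_congr rfl fun s _ => ?_
      rw [Finset.card_erase_of_mem (Finset.empty_mem_powerset _), Finset.card_powerset]
    · intro s _ t _ hst
      rw [Function.onFun, Finset.disjoint_left]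
      intro P hPs hPt
      rw [Finset.mem_erase, Finset.mem_powerset] at hPs hPt
      obtain ⟨v, hv⟩ := Finset.nonempty_iff_ne_empty.mpr hPs.1
      have h1 := (Finset.mem_filter.mp (hPs.2 hv)).2
      have h2 := (Finset.mem_filter.mp (hPt.2 hv)).2
      exact hst (h1 ▸ h2 ▸ rfl)
  omega

end Stmt14Aux

open Stmt14Aux in
/-- In the setting of Statement 13, `CIM_G` is a simplex of dimension
`2^{p−1} − 1 − ∑ₛ (2^{pₛ} − 1)`: the characteristic imsets of DAGs with skeleton `G` form
an affinely independent set of cardinality `2^{p−1} − ∑ₛ (2^{pₛ} − 1)`. -/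
theorem stmt14 (n m : ℕ) (comp : Fin n → Fin m) (hsurj : Function.Surjective comp)
    (V : Set (Finset (Fin (n + 1)) → ℝ))
    (hV : V = {x | ∃ D : DAGraph (n + 1), D.skeleton = starJoin n m comp ∧ x = D.cim}) :
    V.ncard = 2 ^ n - ∑ s : Fin m, (2 ^ (Finset.univ.filter fun v => comp v = s).card - 1) ∧
      AffineIndependent ℝ ((↑) : V → (Finset (Fin (n + 1)) → ℝ)) := by
  classical
  clear hsurj
  set R : Finset (Finset (Fin n)) :=
    Finset.univ.filter (fun P => P = ∅ ∨ ¬ sc comp P) with hR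
  have hVeq : V = ↑(R.image (phi comp)) := by
    rw [hV]
    ext x
    simp only [Set.mem_setOf_eq, Finset.coe_image, Set.mem_image, Finset.mem_coe, hR,
      Finset.mem_filter, Finset.mem_univ, true_and]
    constructor
    · rintro ⟨D, hsk, rfl⟩
      rw [cim_eq comp D hsk]
      set P := Finset.univ.filter fun v : Fin n => D.E v.castSucc (Fin.last n) with hP
      by_cases hsc : sc comp P
      · exact ⟨∅, Or.inl rfl, (phi_of_sc hsc).symm⟩
      · exact ⟨P, Or.inr hsc, rfl⟩
    · rintro ⟨P, hP, rfl⟩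
      refine ⟨DP comp P, DP_skeleton comp P, ?_⟩
      rw [cim_eq comp _ (DP_skeleton comp P), DP_pa]
  have hinj : Set.InjOn (phi comp) ↑R := by
    intro P hP Q hQ h
    rw [hR, Finset.coe_filter] at hP hQ
    exact phi_inj hP.2 hQ.2 h
  constructor
  · rw [hVeq, Set.ncard_coe_finset, Finset.card_image_of_injOn hinj, hR, card_R]
  · set ψ : {P : Finset (Fin n) // P = ∅ ∨ ¬ sc comp P} → (Finset (Fin (n + 1)) → ℝ) :=
      fun P => phi comp P.1 with hψ
    have hAI : AffineIndependent ℝ ψ := by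
      rw [affineIndependent_iff_linearIndependent_vsub ℝ _ ⟨∅, Or.inl rfl⟩]
      have hg : ∀ i : {x : {P : Finset (Fin n) // P = ∅ ∨ ¬ sc comp P} //
          x ≠ ⟨∅, Or.inl rfl⟩}, ¬ sc comp i.1.1 := by
        rintro ⟨⟨P, hP⟩, hne⟩
        rcases hP with rfl | hP
        · exact absurd (Subtype.ext rfl) hne
        · exact hP
      have hcomp := (linIndep comp).comp
        (fun i => (⟨i.1.1, hg i⟩ : {P : Finset (Fin n) // ¬ sc comp P}))
        (by
          rintro ⟨⟨P, hP⟩, h1⟩ ⟨⟨Q, hQ⟩, h2⟩ h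
          simp only [Subtype.mk.injEq] at h
          exact Subtype.ext (Subtype.ext h))
      exact hcomp
    have hrange : V = Set.range ψ := by
      rw [hVeq]
      ext x
      simp only [Finset.coe_image, Set.mem_image, Finset.mem_coe, hR, Finset.mem_filter,
        Finset.mem_univ, true_and, Set.mem_range, hψ]
      constructor
      · rintro ⟨P, hP, rfl⟩
        exact ⟨⟨P, hP⟩, rfl⟩
      · rintro ⟨⟨P, hP⟩, rfl⟩
        exact ⟨P, hP, rfl⟩
    rw [hrange]
    exact hAI.range
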